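/- Under assumption (F), let α* be an optimal control for x with trajectory y := y_x^{α*}. Then: (i) for almost every t ∈ (0, t_x(α*)) and every nonzero p ∈ D⁺v(y(t)), ẏ(t) = −p/|p|; (ii) for every t ∈ (0, t_x(α*)) and every p ∈ D⁺v(y(t)), |p| = ℓ(y(t)); (iii) for every t ∈ (0, t_x(α*)) the set D⁺v(y(t)) contains at most one element. -/

import Mathlib

open MeasureTheory Filter Metric Set Topology
open scoped ENNReal

noncomputable section

/-- `n`-dimensional Euclidean space. -/
abbrev Euc (n : ℕ) := EuclideanSpace ℝ (Fin n)

variable {n : ℕ}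

/-- Trajectory of the control system `ẏ = α`, `y 0 = x`. -/
def traj (x : Euc n) (α : ℝ → Euc n) (t : ℝ) : Euc n :=
  x + ∫ s in Set.Ioc (0 : ℝ) t, α s

/-- An admissible control: measurable with `‖α s‖ ≤ 1` for a.e. `s ≥ 0`. -/
def Admissible (α : ℝ → Euc n) : Prop :=
  Measurable α ∧ ∀ᵐ s ∂(volume : Measure ℝ), 0 ≤ s → ‖α s‖ ≤ 1

/-- Hitting time `t_x(α) = inf {s ≥ 0 : y_x^α(s) ∈ M}` (`∞` if the set is empty). -/
def hitTime (M : Set (Euc n)) (x : Euc n) (α : ℝ → Euc n) : ℝ≥0∞ :=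
  ⨅ (s : ℝ) (_ : 0 ≤ s) (_ : traj x α s ∈ M), ENNReal.ofReal s

/-- Cost `∫₀^{t_x(α)} ℓ(y_x^α(s)) ds` of a control (as an extended real, `ℓ ≥ 0`). -/
def cost (M : Set (Euc n)) (l : Euc n → ℝ) (x : Euc n) (α : ℝ → Euc n) : ℝ≥0∞ :=
  ∫⁻ s in {s : ℝ | 0 < s ∧ ENNReal.ofReal s < hitTime M x α},
    ENNReal.ofReal (l (traj x α s))

/-- The value function (extended-real valued). -/
def valE (M : Set (Euc n)) (l : Euc n → ℝ) (x : Euc n) : ℝ≥0∞ :=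
  ⨅ (α : ℝ → Euc n) (_ : Admissible α), cost M l x α

/-- The value function `v`. -/
def val (M : Set (Euc n)) (l : Euc n → ℝ) (x : Euc n) : ℝ := (valE M l x).toReal

/-- A control is optimal for `x` if it is admissible and attains the infimum. -/
def IsOptimal (M : Set (Euc n)) (l : Euc n → ℝ) (x : Euc n) (α : ℝ → Euc n) : Prop :=
  Admissible α ∧ cost M l x α = valE M l x

/-- The viscosity subdifferential `D⁻v(z)`. -/
def subDiff (v : Euc n → ℝ) (z : Euc n) : Set (Euc n) :=
  {p | ∀ ε > 0, ∀ᶠ x in 𝓝 z, v z + (inner ℝ p (x - z) : ℝ) - ε * ‖x - z‖ ≤ v x}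

/-- The viscosity superdifferential `D⁺v(z)`. -/
def superDiff (v : Euc n → ℝ) (z : Euc n) : Set (Euc n) :=
  {p | ∀ ε > 0, ∀ᶠ x in 𝓝 z, v x ≤ v z + (inner ℝ p (x - z) : ℝ) + ε * ‖x - z‖}

/-- The set of limiting gradients `D*v(z)`. -/
def limGrad (v : Euc n → ℝ) (z : Euc n) : Set (Euc n) :=
  {p | ∃ u : ℕ → Euc n, (∀ k, DifferentiableAt ℝ v (u k)) ∧
    Tendsto u atTop (𝓝 z) ∧ Tendsto (fun k => gradient v (u k)) atTop (𝓝 p)}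

/-- Distance of the trajectory to the target, with the trajectory extended so that it
remains in `M` after the hitting time. -/
def extDist (M : Set (Euc n)) (x : Euc n) (α : ℝ → Euc n) (t : ℝ) : ℝ :=
  if ENNReal.ofReal t < hitTime M x α then Metric.infDist (traj x α t) M else 0

end

noncomputable section
namespace SOpt
open MeasureTheory
variable {n : ℕ}

/-- truncated control -/
def tr (α : ℝ → Euc n) : ℝ → Euc n := fun s => if 0 ≤ s then α s else 0

lemma tr_meas {α : ℝ → Euc n} (hα : Measurable α) : Measurable (tr α) :=
  Measurable.ite measurableSet_Ici hα measurable_const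

lemma tr_bound {α : ℝ → Euc n} (hα : Admissible α) :
    ∀ᵐ s ∂(volume : Measure ℝ), ‖tr α s‖ ≤ 1 := by
  filter_upwards [hα.2] with s hs
  by_cases h : 0 ≤ s
  · simpa [tr, h] using hs h
  · simp [tr, h]

lemma tr_integrableOn {α : ℝ → Euc n} (hα : Admissible α) {s : Set ℝ} (hs : volume s ≠ ∞) :
    IntegrableOn (tr α) s := by
  refine Measure.integrableOn_of_bounded (M := 1) hs ((tr_meas hα.1).aestronglyMeasurable) ?_
  exact ae_restrict_of_ae (tr_bound hα)

lemma tr_intervalIntegrable {α : ℝ → Euc n} (hα : Admissible α) (a b : ℝ) :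
    IntervalIntegrable (tr α) volume a b := by
  rw [intervalIntegrable_iff]
  exact tr_integrableOn hα measure_Ioc_lt_top.ne

lemma traj_eq (x : Euc n) (α : ℝ → Euc n) (t : ℝ) :
    traj x α t = x + ∫ s in (0:ℝ)..(max t 0), tr α s := by
  rcases le_or_gt t 0 with h | h
  · rw [max_eq_right h]
    simp [traj, Set.Ioc_eq_empty_of_le h]
  · rw [max_eq_left h.le, intervalIntegral.integral_of_le h.le, traj]
    congr 1
    refine setIntegral_congr_fun measurableSet_Ioc fun s hs => ?_
    simp [tr, hs.1.le]

lemma traj_nonpos (x : Euc n) (α : ℝ → Euc n) {t : ℝ} (h : t ≤ 0) : traj x α t = x := by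
  simp [traj, Set.Ioc_eq_empty_of_le h]

lemma traj_lipschitz {α : ℝ → Euc n} (hα : Admissible α) (x : Euc n) :
    LipschitzWith 1 (traj x α) := by
  have hG : LipschitzWith 1 (fun t : ℝ => x + ∫ s in (0:ℝ)..t, tr α s) := by
    refine LipschitzWith.of_dist_le_mul fun a b => ?_
    rw [dist_eq_norm, add_sub_add_left_eq_sub,
      intervalIntegral.integral_interval_sub_left (tr_intervalIntegrable hα 0 a)
        (tr_intervalIntegrable hα 0 b)]
    calc ‖∫ s in b..a, tr α s‖ ≤ 1 * |a - b| := by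
          refine intervalIntegral.norm_integral_le_of_norm_le_const_ae ?_
          filter_upwards [tr_bound hα] with s hs _ using hs
      _ = 1 * dist a b := by rw [Real.dist_eq]
  have : traj x α = (fun t : ℝ => x + ∫ s in (0:ℝ)..t, tr α s) ∘ (fun t => max t 0) := by
    funext t; exact traj_eq x α t
  rw [this]
  simpa using hG.comp ((LipschitzWith.id (α := ℝ)).max_const 0)

-- chunk 2
lemma traj_continuous {α : ℝ → Euc n} (hα : Admissible α) (x : Euc n) :
    Continuous (traj x α) := (traj_lipschitz hα x).continuous

lemma adm_integrableOn {γ : ℝ → Euc n} (hγ : Admissible γ) {a b : ℝ} (ha : 0 ≤ a) :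
    IntegrableOn γ (Set.Ioc a b) := by
  refine (tr_integrableOn hγ measure_Ioc_lt_top.ne).congr_fun (fun r hr => ?_) measurableSet_Ioc
  simp [tr, (ha.trans hr.1.le)]

def hitSet (M : Set (Euc n)) (x : Euc n) (α : ℝ → Euc n) : Set ℝ :=
  {s | 0 ≤ s ∧ traj x α s ∈ M}

lemma hitSet_closed {M : Set (Euc n)} (hM : IsClosed M) {α : ℝ → Euc n} (hα : Admissible α)
    (x : Euc n) : IsClosed (hitSet M x α) :=
  (isClosed_Ici.inter (hM.preimage (traj_continuous hα x)) : _)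

lemma hitTime_le {M : Set (Euc n)} {x : Euc n} {α : ℝ → Euc n} {s : ℝ} (hs : 0 ≤ s)
    (h : traj x α s ∈ M) : hitTime M x α ≤ ENNReal.ofReal s :=
  iInf_le_of_le s (iInf_le_of_le hs (iInf_le _ h))

lemma hitTime_eq_sInf {M : Set (Euc n)} (hM : IsClosed M) {x : Euc n} {α : ℝ → Euc n}
    (hα : Admissible α) (hne : (hitSet M x α).Nonempty) :
    hitTime M x α = ENNReal.ofReal (sInf (hitSet M x α)) ∧
      sInf (hitSet M x α) ∈ hitSet M x α := by
  have hbdd : BddBelow (hitSet M x α) := ⟨0, fun s hs => hs.1⟩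
  have hmem : sInf (hitSet M x α) ∈ hitSet M x α :=
    (hitSet_closed hM hα x).csInf_mem hne hbdd
  refine ⟨le_antisymm (hitTime_le hmem.1 hmem.2) ?_, hmem⟩
  refine le_iInf fun s => le_iInf fun hs => le_iInf fun hsM => ?_
  exact ENNReal.ofReal_le_ofReal (csInf_le hbdd ⟨hs, hsM⟩)

lemma hitTime_eq_top {M : Set (Euc n)} {x : Euc n} {α : ℝ → Euc n}
    (h : hitSet M x α = ∅) : hitTime M x α = ⊤ := by
  refine le_antisymm le_top (le_iInf fun s => le_iInf fun hs => le_iInf fun hm => ?_)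
  exact absurd (⟨hs, hm⟩ : s ∈ hitSet M x α) (Set.eq_empty_iff_forall_notMem.1 h s)

lemma not_hit_of_lt_hitTime {M : Set (Euc n)} {x : Euc n} {α : ℝ → Euc n} {t : ℝ}
    (ht : 0 ≤ t) (h : ENNReal.ofReal t < hitTime M x α) : traj x α t ∉ M :=
  fun hm => absurd (hitTime_le ht hm) (not_le.2 h)

lemma hitTime_eq_add {M : Set (Euc n)} (hM : IsClosed M) {x z : Euc n} {γ β : ℝ → Euc n}
    (hγ : Admissible γ) (hβ : Admissible β) {t : ℝ} (ht : 0 ≤ t)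
    (H : ∀ s, s ∈ hitSet M x γ ↔ t ≤ s ∧ s - t ∈ hitSet M z β) :
    hitTime M x γ = ENNReal.ofReal t + hitTime M z β := by
  rcases Set.eq_empty_or_nonempty (hitSet M z β) with he | hne
  · have hγe : hitSet M x γ = ∅ := by
      ext s
      simp only [Set.mem_empty_iff_false, iff_false]
      intro hs
      exact (Set.eq_empty_iff_forall_notMem.1 he _) ((H s).1 hs).2
    rw [hitTime_eq_top hγe, hitTime_eq_top he]
    simp
  · obtain ⟨hβeq, hβmem⟩ := hitTime_eq_sInf hM hβ hne
    set u₀ := sInf (hitSet M z β) with hu₀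
    have hu₀0 : 0 ≤ u₀ := hβmem.1
    have hmemγ : t + u₀ ∈ hitSet M x γ := (H _).2 ⟨by linarith, by simpa using hβmem⟩
    obtain ⟨hγeq, hγmem⟩ := hitTime_eq_sInf hM hγ ⟨_, hmemγ⟩
    have h1 : sInf (hitSet M x γ) ≤ t + u₀ := csInf_le ⟨0, fun s hs => hs.1⟩ hmemγ
    have h2 : t + u₀ ≤ sInf (hitSet M x γ) := by
      obtain ⟨hts, hmem⟩ := (H _).1 hγmem
      have := csInf_le (⟨0, fun s hs => hs.1⟩ : BddBelow (hitSet M z β)) hmem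
      rw [← hu₀] at this
      linarith
    rw [hγeq, hβeq, le_antisymm h1 h2, ENNReal.ofReal_add ht hu₀0]

/-- shifted control -/
def shiftC (α : ℝ → Euc n) (t : ℝ) : ℝ → Euc n := fun s => α (s + t)

lemma shiftC_admissible {α : ℝ → Euc n} (hα : Admissible α) {t : ℝ} (ht : 0 ≤ t) :
    Admissible (shiftC α t) := by
  refine ⟨hα.1.comp (measurable_add_const t), ?_⟩
  filter_upwards [(measurePreserving_add_right volume t).quasiMeasurePreserving.ae hα.2]
    with s hs hs0
  exact hs (by linarith)

lemma traj_shift {α : ℝ → Euc n} (hα : Admissible α) (x : Euc n) {t s : ℝ}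
    (ht : 0 ≤ t) (hs : 0 ≤ s) :
    traj (traj x α t) (shiftC α t) s = traj x α (t + s) := by
  have key : ∫ r in Set.Ioc (0:ℝ) s, shiftC α t r
      = (∫ r in (0:ℝ)..(t + s), tr α r) - ∫ r in (0:ℝ)..t, tr α r := by
    calc ∫ r in Set.Ioc (0:ℝ) s, shiftC α t r
        = ∫ r in Set.Ioc (0:ℝ) s, tr α (r + t) := by
          refine setIntegral_congr_fun measurableSet_Ioc fun r hr => ?_
          have : (0:ℝ) ≤ r + t := by have := hr.1; linarith
          simp [shiftC, tr, this]
      _ = ∫ r in (0:ℝ)..s, tr α (r + t) := (intervalIntegral.integral_of_le hs).symm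
      _ = ∫ r in (0+t:ℝ)..(s+t), tr α r := intervalIntegral.integral_comp_add_right _ _
      _ = ∫ r in (t:ℝ)..(t+s), tr α r := by rw [zero_add, add_comm s t]
      _ = (∫ r in (0:ℝ)..(t + s), tr α r) - ∫ r in (0:ℝ)..t, tr α r :=
          (intervalIntegral.integral_interval_sub_left
            (tr_intervalIntegrable hα 0 (t+s)) (tr_intervalIntegrable hα 0 t)).symm
  rw [traj, key, traj_eq x α t, traj_eq x α (t+s), max_eq_left ht,
    max_eq_left (by linarith : (0:ℝ) ≤ t + s)]
  abel

lemma hitTime_shift {M : Set (Euc n)} (hM : IsClosed M) {α : ℝ → Euc n} (hα : Admissible α)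
    (x : Euc n) {t : ℝ} (ht : 0 ≤ t) (hle : ENNReal.ofReal t ≤ hitTime M x α) :
    hitTime M x α = ENNReal.ofReal t + hitTime M (traj x α t) (shiftC α t) := by
  refine hitTime_eq_add hM hα (shiftC_admissible hα ht) ht fun s => ?_
  constructor
  · rintro ⟨hs0, hsM⟩
    have hts : t ≤ s := by
      by_contra hctr
      have h1 := hitTime_le hs0 hsM
      have h2 : ENNReal.ofReal s < ENNReal.ofReal t :=
        (ENNReal.ofReal_lt_ofReal_iff_of_nonneg hs0).2 (lt_of_not_ge hctr)
      exact absurd (hle.trans h1) (not_le.2 h2)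
    refine ⟨hts, by linarith, ?_⟩
    rw [traj_shift hα x ht (by linarith : (0:ℝ) ≤ s - t)]
    simpa [add_sub_cancel] using hsM
  · rintro ⟨hts, hst0, hsM'⟩
    refine ⟨le_trans ht hts, ?_⟩
    rw [traj_shift hα x ht hst0] at hsM'
    simpa [add_sub_cancel] using hsM'

/-- concatenated control -/
def concat (α : ℝ → Euc n) (t : ℝ) (β : ℝ → Euc n) : ℝ → Euc n :=
  fun s => if s ≤ t then α s else β (s - t)

lemma concat_admissible {α β : ℝ → Euc n} (hα : Admissible α) (hβ : Admissible β)
    {t : ℝ} (ht : 0 ≤ t) : Admissible (concat α t β) := by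
  refine ⟨Measurable.ite measurableSet_Iic hα.1 (hβ.1.comp (measurable_id.sub_const t)), ?_⟩
  filter_upwards [hα.2,
    (measurePreserving_add_right volume (-t)).quasiMeasurePreserving.ae hβ.2] with s h1 h2 hs0
  by_cases h : s ≤ t
  · simpa [concat, h] using h1 hs0
  · have h3 : (0:ℝ) ≤ s + -t := by linarith [lt_of_not_ge h]
    simpa [concat, h, sub_eq_add_neg] using h2 h3

lemma traj_concat_left {α β : ℝ → Euc n} (x : Euc n) {s t : ℝ} (hst : s ≤ t) :
    traj x (concat α t β) s = traj x α s := by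
  unfold traj
  congr 1
  refine setIntegral_congr_fun measurableSet_Ioc fun r hr => ?_
  simp [concat, hr.2.trans hst]

lemma traj_concat_right {α β : ℝ → Euc n} (hα : Admissible α) (hβ : Admissible β)
    (x : Euc n) {s t : ℝ} (ht : 0 ≤ t) (hts : t ≤ s) :
    traj x (concat α t β) s = traj (traj x α t) β (s - t) := by
  have hsplit : ∫ r in Set.Ioc (0:ℝ) s, concat α t β r
      = (∫ r in Set.Ioc (0:ℝ) t, concat α t β r) + ∫ r in Set.Ioc t s, concat α t β r := by
    rw [← Set.Ioc_union_Ioc_eq_Ioc ht hts]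
    refine setIntegral_union (Set.Ioc_disjoint_Ioc_of_le le_rfl) measurableSet_Ioc ?_ ?_
    · refine (adm_integrableOn (concat_admissible hα hβ ht) le_rfl)
    · refine (adm_integrableOn (concat_admissible hα hβ ht) ht)
  have h1 : ∫ r in Set.Ioc (0:ℝ) t, concat α t β r = ∫ r in Set.Ioc (0:ℝ) t, α r :=
    setIntegral_congr_fun measurableSet_Ioc fun r hr => by simp [concat, hr.2]
  have h2 : ∫ r in Set.Ioc t s, concat α t β r = ∫ r in Set.Ioc (0:ℝ) (s - t), β r := by
    calc ∫ r in Set.Ioc t s, concat α t β r = ∫ r in Set.Ioc t s, β (r - t) :=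
          setIntegral_congr_fun measurableSet_Ioc fun r hr => by
            simp [concat, not_le.2 hr.1]
      _ = ∫ r in t..s, β (r - t) := (intervalIntegral.integral_of_le hts).symm
      _ = ∫ r in (t-t)..(s-t), β r := intervalIntegral.integral_comp_sub_right _ _
      _ = ∫ r in (0:ℝ)..(s-t), β r := by rw [sub_self]
      _ = ∫ r in Set.Ioc (0:ℝ) (s - t), β r :=
          intervalIntegral.integral_of_le (by linarith)
  rw [traj, hsplit, h1, h2, traj, traj, add_assoc]

lemma hitTime_concat {M : Set (Euc n)} (hM : IsClosed M) {α β : ℝ → Euc n}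
    (hα : Admissible α) (hβ : Admissible β) (x : Euc n) {t : ℝ} (ht : 0 ≤ t)
    (hle : ENNReal.ofReal t ≤ hitTime M x α) :
    hitTime M x (concat α t β) = ENNReal.ofReal t + hitTime M (traj x α t) β := by
  refine hitTime_eq_add hM (concat_admissible hα hβ ht) hβ ht fun s => ?_
  constructor
  · rintro ⟨hs0, hsM⟩
    have hts : t ≤ s := by
      by_contra hctr
      have hst : s ≤ t := (lt_of_not_ge hctr).le
      rw [traj_concat_left x hst] at hsM
      have h1 := hitTime_le hs0 hsM
      have h2 : ENNReal.ofReal s < ENNReal.ofReal t :=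
        (ENNReal.ofReal_lt_ofReal_iff_of_nonneg hs0).2 (lt_of_not_ge hctr)
      exact absurd (hle.trans h1) (not_le.2 h2)
    rw [traj_concat_right hα hβ x ht hts] at hsM
    exact ⟨hts, by linarith, hsM⟩
  · rintro ⟨hts, hst0, hsM'⟩
    refine ⟨le_trans ht hts, ?_⟩
    rw [traj_concat_right hα hβ x ht hts]
    exact hsM'

-- chunk 3
lemma costSet_measurable (τ : ℝ≥0∞) :
    MeasurableSet {s : ℝ | 0 < s ∧ ENNReal.ofReal s < τ} := by
  have h : {s : ℝ | 0 < s ∧ ENNReal.ofReal s < τ}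
      = Set.Ioi 0 ∩ ENNReal.ofReal ⁻¹' Set.Iio τ := rfl
  rw [h]
  exact measurableSet_Ioi.inter (ENNReal.measurable_ofReal measurableSet_Iio)

lemma lintegral_split (g : ℝ → ℝ≥0∞) {t : ℝ} (ht : 0 ≤ t) (τ' : ℝ≥0∞) :
    ∫⁻ s in {s : ℝ | 0 < s ∧ ENNReal.ofReal s < ENNReal.ofReal t + τ'}, g s
      = (∫⁻ s in Set.Ioc 0 t, g s)
        + ∫⁻ u in {u : ℝ | 0 < u ∧ ENNReal.ofReal u < τ'}, g (u + t) := by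
  rcases eq_or_ne τ' 0 with rfl | hτ'
  · have hset : {s : ℝ | 0 < s ∧ ENNReal.ofReal s < ENNReal.ofReal t + 0} = Set.Ioo 0 t := by
      ext s
      simp only [add_zero, Set.mem_setOf_eq, Set.mem_Ioo]
      exact and_congr_right fun hs => ENNReal.ofReal_lt_ofReal_iff_of_nonneg hs.le
    have h2 : {u : ℝ | 0 < u ∧ ENNReal.ofReal u < 0} = ∅ := by
      ext u; simp
    rw [hset, h2, setLIntegral_congr (Ioo_ae_eq_Ioc (μ := volume) (a := (0:ℝ)) (b := t))]
    simp
  · have hB : MeasurableSet {s : ℝ | t < s ∧ ENNReal.ofReal s < ENNReal.ofReal t + τ'} := by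
      have h : {s : ℝ | t < s ∧ ENNReal.ofReal s < ENNReal.ofReal t + τ'}
          = Set.Ioi t ∩ ENNReal.ofReal ⁻¹' Set.Iio (ENNReal.ofReal t + τ') := rfl
      rw [h]
      exact measurableSet_Ioi.inter (ENNReal.measurable_ofReal measurableSet_Iio)
    have hunion : {s : ℝ | 0 < s ∧ ENNReal.ofReal s < ENNReal.ofReal t + τ'}
        = Set.Ioc 0 t ∪ {s : ℝ | t < s ∧ ENNReal.ofReal s < ENNReal.ofReal t + τ'} := by
      ext s
      simp only [Set.mem_setOf_eq, Set.mem_union, Set.mem_Ioc]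
      constructor
      · rintro ⟨hs, hlt⟩
        rcases le_or_gt s t with h | h
        · exact Or.inl ⟨hs, h⟩
        · exact Or.inr ⟨h, hlt⟩
      · rintro (⟨hs, hle⟩ | ⟨hts, hlt⟩)
        · refine ⟨hs, lt_of_le_of_lt (ENNReal.ofReal_le_ofReal hle) ?_⟩
          exact ENNReal.lt_add_right ENNReal.ofReal_ne_top hτ'
        · exact ⟨lt_of_le_of_lt ht hts, hlt⟩
    have hdisj : Disjoint (Set.Ioc (0:ℝ) t)
        {s : ℝ | t < s ∧ ENNReal.ofReal s < ENNReal.ofReal t + τ'} := by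
      rw [Set.disjoint_left]
      rintro s ⟨_, hst⟩ ⟨hts, _⟩
      exact absurd hts (not_lt.2 hst)
    rw [hunion, lintegral_union hB hdisj]
    congr 1
    have hpre : (fun u : ℝ => u + t) ⁻¹'
        {s : ℝ | t < s ∧ ENNReal.ofReal s < ENNReal.ofReal t + τ'}
        = {u : ℝ | 0 < u ∧ ENNReal.ofReal u < τ'} := by
      ext u
      simp only [Set.mem_preimage, Set.mem_setOf_eq, lt_add_iff_pos_left]
      refine and_congr_right fun hu => ?_
      rw [ENNReal.ofReal_add hu.le ht, add_comm (ENNReal.ofReal u),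
        ENNReal.add_lt_add_iff_left ENNReal.ofReal_ne_top]
    rw [← hpre, (measurePreserving_add_right volume t).setLIntegral_comp_preimage_emb
      (Homeomorph.addRight t).measurableEmbedding g _]

lemma cost_shift {M : Set (Euc n)} (hM : IsClosed M) (l : Euc n → ℝ) {α : ℝ → Euc n}
    (hα : Admissible α) (x : Euc n) {t : ℝ} (ht : 0 ≤ t)
    (hle : ENNReal.ofReal t ≤ hitTime M x α) :
    cost M l x α = (∫⁻ s in Set.Ioc 0 t, ENNReal.ofReal (l (traj x α s)))
      + cost M l (traj x α t) (shiftC α t) := by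
  rw [cost, hitTime_shift hM hα x ht hle,
    lintegral_split (fun s => ENNReal.ofReal (l (traj x α s))) ht _]
  congr 1
  rw [cost]
  refine setLIntegral_congr_fun (costSet_measurable _) ?_
  intro u hu
  dsimp only
  rw [traj_shift hα x ht hu.1.le, add_comm t u]

lemma cost_concat {M : Set (Euc n)} (hM : IsClosed M) (l : Euc n → ℝ) {α β : ℝ → Euc n}
    (hα : Admissible α) (hβ : Admissible β) (x : Euc n) {t : ℝ} (ht : 0 ≤ t)
    (hle : ENNReal.ofReal t ≤ hitTime M x α) :
    cost M l x (concat α t β) = (∫⁻ s in Set.Ioc 0 t, ENNReal.ofReal (l (traj x α s)))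
      + cost M l (traj x α t) β := by
  rw [cost, hitTime_concat hM hα hβ x ht hle,
    lintegral_split (fun s => ENNReal.ofReal (l (traj x (concat α t β) s))) ht _]
  congr 1
  · refine setLIntegral_congr_fun measurableSet_Ioc ?_
    intro s hs
    dsimp only
    rw [traj_concat_left x hs.2]
  · rw [cost]
    refine setLIntegral_congr_fun (costSet_measurable _) ?_
    intro u hu
    dsimp only
    rw [traj_concat_right hα hβ x ht (by linarith [hu.1] : t ≤ u + t)]
    congr 2
    ring

-- chunk 4
lemma admissible_const {u : Euc n} (hu : ‖u‖ ≤ 1) : Admissible (fun _ => u) :=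
  ⟨measurable_const, Filter.Eventually.of_forall fun _ _ => hu⟩

lemma traj_const (x : Euc n) (u : Euc n) {t : ℝ} (ht : 0 ≤ t) :
    traj x (fun _ => u) t = x + t • u := by
  rw [traj, setIntegral_const, Real.volume_real_Ioc_of_le ht, sub_zero]

lemma valE_le_cost {M : Set (Euc n)} {l : Euc n → ℝ} {x : Euc n} {α : ℝ → Euc n}
    (hα : Admissible α) : valE M l x ≤ cost M l x α :=
  iInf_le_of_le α (iInf_le _ hα)

lemma exists_cost_lt {M : Set (Euc n)} {l : Euc n → ℝ} {x : Euc n} {b : ℝ≥0∞}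
    (h : valE M l x < b) : ∃ β, Admissible β ∧ cost M l x β < b := by
  by_contra hc
  push_neg at hc
  exact absurd h (not_lt.2 (le_iInf fun β => le_iInf fun hβ => hc β hβ))

lemma cost_le_bound {M : Set (Euc n)} {l : Euc n → ℝ} {x : Euc n} {α : ℝ → Euc n}
    {C : ℝ} (hC : ∀ z, l z ≤ C) (hC0 : 0 ≤ C) {T : ℝ}
    (hT : 0 ≤ T) (hle : hitTime M x α ≤ ENNReal.ofReal T) :
    cost M l x α ≤ ENNReal.ofReal (C * T) := by
  have hsub : {s : ℝ | 0 < s ∧ ENNReal.ofReal s < hitTime M x α} ⊆ Set.Ioc 0 T := by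
    intro s hs
    refine ⟨hs.1, ?_⟩
    exact ((ENNReal.ofReal_lt_ofReal_iff_of_nonneg hs.1.le).1 (lt_of_lt_of_le hs.2 hle)).le
  calc cost M l x α ≤ ∫⁻ s in Set.Ioc 0 T, ENNReal.ofReal (l (traj x α s)) :=
        lintegral_mono_set hsub
    _ ≤ ∫⁻ _ in Set.Ioc (0:ℝ) T, ENNReal.ofReal C :=
        setLIntegral_mono measurable_const fun s _ => ENNReal.ofReal_le_ofReal (hC _)
    _ = ENNReal.ofReal C * volume (Set.Ioc (0:ℝ) T) := setLIntegral_const _ _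
    _ = ENNReal.ofReal (C * T) := by
        rw [Real.volume_Ioc, sub_zero, ← ENNReal.ofReal_mul hC0]

lemma lintegral_l_ne_top {l : Euc n → ℝ} {C : ℝ} (hC : ∀ z, l z ≤ C) (g : ℝ → Euc n)
    (a b : ℝ) : (∫⁻ s in Set.Ioc a b, ENNReal.ofReal (l (g s))) ≠ ⊤ := by
  have h1 : (∫⁻ s in Set.Ioc a b, ENNReal.ofReal (l (g s)))
      ≤ ENNReal.ofReal C * volume (Set.Ioc a b) := by
    rw [← setLIntegral_const]
    exact setLIntegral_mono measurable_const fun s _ => ENNReal.ofReal_le_ofReal (hC _)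
  exact ne_top_of_le_ne_top (ENNReal.mul_ne_top ENNReal.ofReal_ne_top measure_Ioc_lt_top.ne) h1

lemma valE_lt_top {M : Set (Euc n)} (hMne : M.Nonempty) {l : Euc n → ℝ}
    {C : ℝ} (hC : ∀ z, l z ≤ C) (hC0 : 0 ≤ C) (x : Euc n) : valE M l x < ⊤ := by
  obtain ⟨m, hm⟩ := hMne
  rcases eq_or_ne x m with rfl | hxm
  · refine lt_of_le_of_lt (valE_le_cost (admissible_const (u := 0) (by simp))) ?_
    refine lt_of_le_of_lt (cost_le_bound hC hC0 le_rfl (T := 0) ?_) ENNReal.ofReal_lt_top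
    have h0 : traj x (fun _ => (0:Euc n)) 0 = x := by
      rw [traj_const x 0 le_rfl]; simp
    exact hitTime_le le_rfl (h0.symm ▸ hm)
  · have hmx : (0:ℝ) < ‖m - x‖ := by
      rw [norm_sub_pos_iff]; exact Ne.symm hxm
    set u := ‖m - x‖⁻¹ • (m - x) with hu_def
    have hu : ‖u‖ ≤ 1 := by
      rw [hu_def, norm_smul, norm_inv, norm_norm, inv_mul_cancel₀ hmx.ne']
    have htraj : traj x (fun _ => u) ‖m - x‖ = m := by
      rw [traj_const x u hmx.le, hu_def, smul_smul, mul_inv_cancel₀ hmx.ne', one_smul]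
      abel
    refine lt_of_le_of_lt (valE_le_cost (admissible_const hu)) ?_
    refine lt_of_le_of_lt (cost_le_bound hC hC0 hmx.le
      (hitTime_le hmx.le (htraj.symm ▸ hm))) ENNReal.ofReal_lt_top
  
lemma valE_le_add {M : Set (Euc n)} (hM : IsClosed M) (l : Euc n → ℝ) {α : ℝ → Euc n}
    (hα : Admissible α) (x : Euc n) {t : ℝ} (ht : 0 ≤ t)
    (hle : ENNReal.ofReal t ≤ hitTime M x α) :
    valE M l x ≤ (∫⁻ s in Set.Ioc 0 t, ENNReal.ofReal (l (traj x α s)))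
      + valE M l (traj x α t) := by
  set c := ∫⁻ s in Set.Ioc 0 t, ENNReal.ofReal (l (traj x α s)) with hc
  refine ENNReal.le_of_forall_pos_le_add fun ε hε hfin => ?_
  have hvne : valE M l (traj x α t) ≠ ⊤ :=
    (lt_of_le_of_lt (self_le_add_left _ c) hfin).ne
  have hvlt : valE M l (traj x α t) < valE M l (traj x α t) + ε :=
    ENNReal.lt_add_right hvne (by exact_mod_cast hε.ne')
  obtain ⟨β, hβ, hcβ⟩ := exists_cost_lt hvlt
  calc valE M l x ≤ cost M l x (concat α t β) := valE_le_cost (concat_admissible hα hβ ht)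
    _ = c + cost M l (traj x α t) β := cost_concat hM l hα hβ x ht hle
    _ ≤ c + (valE M l (traj x α t) + ε) := add_le_add_right hcβ.le _
    _ = (c + valE M l (traj x α t)) + ε := by rw [add_assoc]

lemma shift_optimal {M : Set (Euc n)} (hM : IsClosed M) {l : Euc n → ℝ}
    {C : ℝ} (hC : ∀ z, l z ≤ C) {x : Euc n} {α : ℝ → Euc n}
    (hopt : IsOptimal M l x α) {t : ℝ} (ht : 0 ≤ t)
    (hle : ENNReal.ofReal t ≤ hitTime M x α) :
    cost M l (traj x α t) (shiftC α t) = valE M l (traj x α t) := by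
  have hα := hopt.1
  have hsplit := cost_shift hM l hα x ht hle
  rw [hopt.2] at hsplit
  have hle2 := valE_le_add hM l hα x ht hle
  have hcne : (∫⁻ s in Set.Ioc 0 t, ENNReal.ofReal (l (traj x α s))) ≠ ⊤ :=
    lintegral_l_ne_top hC _ _ _
  refine le_antisymm ?_ (valE_le_cost (shiftC_admissible hα ht))
  exact (ENNReal.add_le_add_iff_left hcne).1 (le_of_eq_of_le hsplit.symm hle2)

lemma shiftC_shiftC (α : ℝ → Euc n) (s t : ℝ) :
    shiftC (shiftC α s) t = shiftC α (t + s) := by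
  funext u
  show α (u + t + s) = α (u + (t + s))
  rw [add_assoc]

lemma dpp {M : Set (Euc n)} (hM : IsClosed M) {l : Euc n → ℝ}
    {C : ℝ} (hC : ∀ z, l z ≤ C) {x : Euc n} {α : ℝ → Euc n}
    (hopt : IsOptimal M l x α) {s t : ℝ} (hs : 0 ≤ s) (hst : s ≤ t)
    (hle : ENNReal.ofReal t ≤ hitTime M x α) :
    valE M l (traj x α s) = (∫⁻ r in Set.Ioc s t, ENNReal.ofReal (l (traj x α r)))
      + valE M l (traj x α t) := by
  have hα := hopt.1
  have ht : 0 ≤ t := hs.trans hst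
  have hles : ENNReal.ofReal s ≤ hitTime M x α :=
    le_trans (ENNReal.ofReal_le_ofReal hst) hle
  have hadd : ENNReal.ofReal s + ENNReal.ofReal (t - s) = ENNReal.ofReal t := by
    rw [← ENNReal.ofReal_add hs (by linarith)]
    ring_nf
  have hle' : ENNReal.ofReal (t - s) ≤ hitTime M (traj x α s) (shiftC α s) := by
    have hshift := hitTime_shift hM hα x hs hles
    rw [hshift, ← hadd] at hle
    exact (ENNReal.add_le_add_iff_left ENNReal.ofReal_ne_top).1 hle
  have hA : Admissible (shiftC α s) := shiftC_admissible hα hs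
  have hsplit := cost_shift hM l hA (traj x α s) (t := t - s) (by linarith) hle'
  have htraj1 : traj (traj x α s) (shiftC α s) (t - s) = traj x α t := by
    rw [traj_shift hα x hs (by linarith)]
    congr 1
    ring
  have htraj2 : shiftC (shiftC α s) (t - s) = shiftC α t := by
    rw [shiftC_shiftC]
    congr 1
    ring
  have hint : (∫⁻ r in Set.Ioc 0 (t - s), ENNReal.ofReal (l (traj (traj x α s) (shiftC α s) r)))
      = ∫⁻ r in Set.Ioc s t, ENNReal.ofReal (l (traj x α r)) := by
    have hcongr : (∫⁻ r in Set.Ioc 0 (t - s), ENNReal.ofReal (l (traj (traj x α s) (shiftC α s) r)))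
        = ∫⁻ r in Set.Ioc 0 (t - s), ENNReal.ofReal (l (traj x α (r + s))) := by
      refine setLIntegral_congr_fun measurableSet_Ioc ?_
      intro r hr
      dsimp only
      rw [traj_shift hα x hs hr.1.le, add_comm s r]
    rw [hcongr]
    have hpre : (fun u : ℝ => u + s) ⁻¹' Set.Ioc s t = Set.Ioc 0 (t - s) := by
      ext u
      simp only [Set.mem_preimage, Set.mem_Ioc]
      constructor
      · rintro ⟨h1, h2⟩; exact ⟨by linarith, by linarith⟩
      · rintro ⟨h1, h2⟩; exact ⟨by linarith, by linarith⟩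
    rw [← hpre, (measurePreserving_add_right volume s).setLIntegral_comp_preimage_emb
      (Homeomorph.addRight s).measurableEmbedding (fun r => ENNReal.ofReal (l (traj x α r))) _]
  rw [← shift_optimal hM hC hopt hs hles, hsplit, hint, htraj1, htraj2,
    shift_optimal hM hC hopt ht hle]

-- chunk 5
lemma integral_l_toReal {l : Euc n → ℝ} (hlc : Continuous l) (hl0 : ∀ z, 0 ≤ l z)
    {g : ℝ → Euc n} (hg : Continuous g) (a b : ℝ) :
    (∫⁻ r in Set.Ioc a b, ENNReal.ofReal (l (g r))).toReal = ∫ r in Set.Ioc a b, l (g r) := by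
  have h := ofReal_integral_eq_lintegral_ofReal (f := fun r => l (g r))
    (μ := volume.restrict (Set.Ioc a b)) ((hlc.comp hg).integrableOn_Ioc)
    (Filter.Eventually.of_forall fun r => hl0 _)
  rw [← h]
  exact ENNReal.toReal_ofReal (setIntegral_nonneg measurableSet_Ioc fun r _ => hl0 _)

lemma val_dpp {M : Set (Euc n)} (hM : IsClosed M) (hMne : M.Nonempty) {l : Euc n → ℝ}
    (hlc : Continuous l) (hl0 : ∀ z, 0 ≤ l z)
    {C : ℝ} (hC : ∀ z, l z ≤ C) (hC0 : 0 ≤ C) {x : Euc n} {α : ℝ → Euc n}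
    (hopt : IsOptimal M l x α) {s t : ℝ} (hs : 0 ≤ s) (hst : s ≤ t)
    (hle : ENNReal.ofReal t ≤ hitTime M x α) :
    val M l (traj x α s) = (∫ r in Set.Ioc s t, l (traj x α r)) + val M l (traj x α t) := by
  have h := dpp hM hC hopt hs hst hle
  rw [val, val, h, ENNReal.toReal_add (lintegral_l_ne_top hC _ _ _)
    (valE_lt_top hMne hC hC0 _).ne, integral_l_toReal hlc hl0 (traj_continuous hopt.1 x)]

lemma valE_sub_le {M : Set (Euc n)} (hM : IsClosed M) {l : Euc n → ℝ}
    {K : ℝ} (hK0 : 0 ≤ K) (z w : Euc n)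
    (hseg : ∀ a : ℝ, a ∈ Set.Icc (0:ℝ) 1 → l (z + a • (w - z)) ≤ K) :
    valE M l z ≤ ENNReal.ofReal (K * ‖w - z‖) + valE M l w := by
  rcases eq_or_ne w z with rfl | hwz
  · exact le_add_self
  have hh : 0 < ‖w - z‖ := by rw [norm_sub_pos_iff]; exact hwz
  set h := ‖w - z‖ with hh_def
  set u := h⁻¹ • (w - z) with hu_def
  have hu1 : ‖u‖ ≤ 1 := by
    rw [hu_def, norm_smul, norm_inv, Real.norm_eq_abs, abs_of_pos hh, ← hh_def,
      inv_mul_cancel₀ hh.ne']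
  have hadm : Admissible (fun _ : ℝ => u) := admissible_const hu1
  have htraj : ∀ s : ℝ, 0 ≤ s → traj z (fun _ => u) s = z + (s / h) • (w - z) := by
    intro s hs
    rw [traj_const z u hs, hu_def, smul_smul, div_eq_mul_inv]
  have hbound : ∀ s ∈ Set.Ioc (0:ℝ) h,
      ENNReal.ofReal (l (traj z (fun _ => u) s)) ≤ ENNReal.ofReal K := by
    intro s hs
    rw [htraj s hs.1.le]
    exact ENNReal.ofReal_le_ofReal
      (hseg _ ⟨div_nonneg hs.1.le hh.le, (div_le_one hh).2 hs.2⟩)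
  have hKh : (∫⁻ s in Set.Ioc (0:ℝ) h, ENNReal.ofReal (l (traj z (fun _ => u) s)))
      ≤ ENNReal.ofReal (K * h) := by
    calc (∫⁻ s in Set.Ioc (0:ℝ) h, ENNReal.ofReal (l (traj z (fun _ => u) s)))
        ≤ ∫⁻ _ in Set.Ioc (0:ℝ) h, ENNReal.ofReal K :=
          setLIntegral_mono measurable_const hbound
      _ = ENNReal.ofReal K * volume (Set.Ioc (0:ℝ) h) := setLIntegral_const _ _
      _ = ENNReal.ofReal (K * h) := by rw [Real.volume_Ioc, sub_zero, ← ENNReal.ofReal_mul hK0]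
  rcases le_or_gt (ENNReal.ofReal h) (hitTime M z (fun _ => u)) with hcase | hcase
  · have hW : traj z (fun _ => u) h = w := by
      rw [htraj h hh.le, div_self hh.ne', one_smul]
      abel
    have h1 := valE_le_add hM l hadm z hh.le hcase
    rw [hW] at h1
    exact h1.trans (add_le_add_left hKh _)
  · have h1 : valE M l z ≤ cost M l z (fun _ => u) := valE_le_cost hadm
    have hsub : {s : ℝ | 0 < s ∧ ENNReal.ofReal s < hitTime M z (fun _ => u)}
        ⊆ Set.Ioc 0 h := fun s hs =>
      ⟨hs.1, ((ENNReal.ofReal_lt_ofReal_iff_of_nonneg hs.1.le).1 (hs.2.trans hcase)).le⟩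
    have h2 : cost M l z (fun _ => u) ≤ ENNReal.ofReal (K * h) :=
      (lintegral_mono_set hsub).trans hKh
    exact h1.trans ((h2.trans le_self_add))

lemma val_sub_le {M : Set (Euc n)} (hM : IsClosed M) (hMne : M.Nonempty) {l : Euc n → ℝ}
    {C : ℝ} (hC : ∀ z, l z ≤ C) (hC0 : 0 ≤ C)
    {K : ℝ} (hK0 : 0 ≤ K) (z w : Euc n)
    (hseg : ∀ a : ℝ, a ∈ Set.Icc (0:ℝ) 1 → l (z + a • (w - z)) ≤ K) :
    val M l z ≤ K * ‖w - z‖ + val M l w := by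
  have h := valE_sub_le hM hK0 z w hseg
  have hw := valE_lt_top hMne hC hC0 w
  calc (valE M l z).toReal
      ≤ (ENNReal.ofReal (K * ‖w - z‖) + valE M l w).toReal := by
        refine ENNReal.toReal_mono ?_ h
        exact ENNReal.add_ne_top.2 ⟨ENNReal.ofReal_ne_top, hw.ne⟩
    _ = K * ‖w - z‖ + (valE M l w).toReal := by
        rw [ENNReal.toReal_add ENNReal.ofReal_ne_top hw.ne,
          ENNReal.toReal_ofReal (by positivity)]

/-- part (ii), upper bound -/
lemma superdiff_norm_le {M : Set (Euc n)} (hM : IsClosed M) (hMne : M.Nonempty)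
    {l : Euc n → ℝ} (hlc : Continuous l) (hl0 : ∀ z, 0 ≤ l z)
    {C : ℝ} (hC : ∀ z, l z ≤ C) (hC0 : 0 ≤ C) {z : Euc n} {p : Euc n}
    (hp : p ∈ superDiff (val M l) z) : ‖p‖ ≤ l z := by
  rcases eq_or_ne p 0 with rfl | hp0
  · simpa using hl0 z
  have key : ∀ ε : ℝ, 0 < ε → ‖p‖ ≤ l z + 2 * ε := by
    intro ε hε
    have h1 : ∀ᶠ w in 𝓝 z, l w < l z + ε :=
      hlc.continuousAt (Iio_mem_nhds (by linarith))
    have h2 := hp ε hε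
    obtain ⟨r, hr, hball⟩ := Metric.eventually_nhds_iff.1 (h1.and h2)
    set h := r / 2 with hh_def
    have hhpos : 0 < h := by positivity
    set w := z - h • (‖p‖⁻¹ • p) with hw_def
    have hwz : w - z = -(h • (‖p‖⁻¹ • p)) := by rw [hw_def]; abel
    have hnorm : ‖w - z‖ = h := by
      rw [hwz, norm_neg, norm_smul, norm_smul, norm_inv, norm_norm,
        inv_mul_cancel₀ (norm_ne_zero_iff.2 hp0), mul_one, Real.norm_eq_abs,
        abs_of_pos hhpos]
    have hwball : dist w z < r := by
      rw [dist_eq_norm, hnorm]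
      linarith
    have hsup := (hball hwball).2
    have hinner : (inner ℝ p (w - z) : ℝ) = -(h * ‖p‖) := by
      rw [hwz, inner_neg_right, real_inner_smul_right, real_inner_smul_right,
        real_inner_self_eq_norm_mul_norm]
      field_simp
    have hseg : ∀ a : ℝ, a ∈ Set.Icc (0:ℝ) 1 → l (z + a • (w - z)) ≤ l z + ε := by
      intro a ha
      have hdist : dist (z + a • (w - z)) z < r := by
        rw [dist_eq_norm, add_sub_cancel_left, norm_smul, Real.norm_eq_abs,
          abs_of_nonneg ha.1, hnorm]
        nlinarith [ha.2, hhpos]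
      exact (hball hdist).1.le
    have hval := val_sub_le hM hMne hC hC0 (by linarith [hl0 z] : (0:ℝ) ≤ l z + ε) z w hseg
    rw [hnorm] at hval
    rw [hinner, hnorm] at hsup
    -- hsup : val w ≤ val z - h‖p‖ + ε h ; hval : val z ≤ (l z + ε) h + val w
    have : h * ‖p‖ ≤ h * (l z + 2 * ε) := by nlinarith
    exact le_of_mul_le_mul_left (by linarith [this]) hhpos
  by_contra hcon
  push_neg at hcon
  have := key ((‖p‖ - l z) / 4) (by linarith)
  linarith

/-- part (ii), lower bound, along optimal trajectory -/
lemma le_superdiff_norm {M : Set (Euc n)} (hM : IsClosed M) (hMne : M.Nonempty)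
    {l : Euc n → ℝ} (hlc : Continuous l) (hl0 : ∀ z, 0 ≤ l z)
    {C : ℝ} (hC : ∀ z, l z ≤ C) (hC0 : 0 ≤ C) {x : Euc n} {α : ℝ → Euc n}
    (hopt : IsOptimal M l x α) {t : ℝ} (ht : 0 < t)
    (hle : ENNReal.ofReal t ≤ hitTime M x α) {p : Euc n}
    (hp : p ∈ superDiff (val M l) (traj x α t)) : l (traj x α t) ≤ ‖p‖ := by
  set y := traj x α with hy
  set z := y t with hz
  have hycont : Continuous y := traj_continuous hopt.1 x
  have hylip := traj_lipschitz hopt.1 x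
  have key : ∀ ε : ℝ, 0 < ε → l z ≤ ‖p‖ + 2 * ε := by
    intro ε hε
    have h1 : ∀ᶠ r in 𝓝 t, l z - ε < l (y r) := by
      have : ContinuousAt (fun r => l (y r)) t := (hlc.comp hycont).continuousAt
      exact this (Ioi_mem_nhds (by linarith))
    obtain ⟨δ1, hδ1, hd1⟩ := Metric.eventually_nhds_iff.1 h1
    obtain ⟨r0, hr0, hball⟩ := Metric.eventually_nhds_iff.1 (hp ε hε)
    set d := min (min δ1 r0) t / 2 with hd_def
    have hdpos : 0 < d := by positivity
    have hdlt : d < min (min δ1 r0) t := by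
      rw [hd_def]
      exact half_lt_self (by positivity)
    set s := t - d with hs_def
    have hs0 : 0 < s := by
      have : d < t := lt_of_lt_of_le hdlt (min_le_right _ _)
      simp only [hs_def]; linarith
    have hst : s < t := by simp only [hs_def]; linarith
    have hys : ‖y s - y t‖ ≤ t - s := by
      have := hylip.dist_le_mul s t
      rw [dist_eq_norm] at this
      simpa [Real.dist_eq, abs_of_nonpos (by linarith : s - t ≤ 0)] using this
    -- superdiff inequality at y s
    have hyd : dist (y s) z < r0 := by
      rw [hz, dist_eq_norm]
      have : t - s < r0 :=
        lt_of_lt_of_le (by simpa [hs_def] using hdlt)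
          ((min_le_left _ _).trans (min_le_right _ _))
      linarith [hys]
    have hsup := hball hyd
    -- dpp equality
    have hdpp := val_dpp hM hMne hlc hl0 hC hC0 hopt hs0.le hst.le hle
    -- integral lower bound
    have hlow : (l z - ε) * (t - s) ≤ ∫ r in Set.Ioc s t, l (y r) := by
      have hconst : (∫ _ in Set.Ioc s t, (l z - ε)) = (l z - ε) * (t - s) := by
        rw [setIntegral_const, Real.volume_real_Ioc_of_le (by linarith), smul_eq_mul,
          mul_comm]
      rw [← hconst]
      refine setIntegral_mono_on (integrableOn_const measure_Ioc_lt_top.ne)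
        ((hlc.comp hycont).integrableOn_Ioc) measurableSet_Ioc ?_
      intro r hr
      have hrd : dist r t < δ1 := by
        rw [Real.dist_eq, abs_of_nonpos (by linarith [hr.1, hr.2] : r - t ≤ 0)]
        have : t - s < δ1 :=
          lt_of_lt_of_le (by simpa [hs_def] using hdlt)
            ((min_le_left _ _).trans (min_le_left _ _))
        linarith [hr.1]
      exact (hd1 hrd).le
    -- combine
    have hsup2 : val M l (y s) ≤ val M l z + (‖p‖ + ε) * (t - s) := by
      have hip : (inner ℝ p (y s - z) : ℝ) ≤ ‖p‖ * (t - s) := by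
        calc (inner ℝ p (y s - z) : ℝ) ≤ ‖p‖ * ‖y s - z‖ := real_inner_le_norm _ _
          _ ≤ ‖p‖ * (t - s) := by
              refine mul_le_mul_of_nonneg_left ?_ (norm_nonneg _)
              rw [hz]; exact hys
      have h2 : ε * ‖y s - z‖ ≤ ε * (t - s) := by
        refine mul_le_mul_of_nonneg_left ?_ hε.le
        rw [hz]; exact hys
      nlinarith [hsup]
    rw [hdpp] at hsup2
    -- (l z - ε)(t-s) ≤ ∫ ≤ (‖p‖+ε)(t-s)
    have hfin : (l z - ε) * (t - s) ≤ (‖p‖ + ε) * (t - s) := by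
      have : (∫ r in Set.Ioc s t, l (y r)) ≤ (‖p‖ + ε) * (t - s) := by linarith [hsup2]
      linarith [hlow]
    have hts : 0 < t - s := by linarith
    nlinarith [hfin]
  by_contra hcon
  push_neg at hcon
  have := key ((l z - ‖p‖) / 4) (by linarith)
  linarith

/-- part (iii) -/
lemma superdiff_subsingleton (v : Euc n → ℝ) (z : Euc n) (c : ℝ)
    (hnorm : ∀ p ∈ superDiff v z, ‖p‖ = c) : (superDiff v z).Subsingleton := by
  intro p hp q hq
  have hmid : (2:ℝ)⁻¹ • (p + q) ∈ superDiff v z := by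
    intro ε hε
    filter_upwards [hp ε hε, hq ε hε] with w h1 h2
    rw [real_inner_smul_left, inner_add_left]
    linarith
  have h1 := hnorm p hp
  have h2 := hnorm q hq
  have h3 := hnorm _ hmid
  have h4 : ‖p + q‖ = 2 * c := by
    rw [norm_smul] at h3
    simp only [norm_inv, Real.norm_ofNat] at h3
    linarith
  have h5 : ‖p + q‖ ^ 2 = ‖p‖ ^ 2 + 2 * (inner ℝ p q : ℝ) + ‖q‖ ^ 2 := norm_add_sq_real p q
  have h6 : ‖p - q‖ ^ 2 = ‖p‖ ^ 2 - 2 * (inner ℝ p q : ℝ) + ‖q‖ ^ 2 := norm_sub_sq_real p q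
  have h7 : ‖p - q‖ ^ 2 = 0 := by
    rw [h1, h2] at h5 h6
    rw [h4] at h5
    nlinarith
  have : ‖p - q‖ = 0 := by
    nlinarith [norm_nonneg (p - q)]
  rwa [norm_eq_zero, sub_eq_zero] at this

-- chunk 6
lemma psi_hasDerivAt {M : Set (Euc n)} (hM : IsClosed M) (hMne : M.Nonempty) {l : Euc n → ℝ}
    (hlc : Continuous l) (hl0 : ∀ z, 0 ≤ l z) {C : ℝ} (hC : ∀ z, l z ≤ C) (hC0 : 0 ≤ C)
    {x : Euc n} {α : ℝ → Euc n} (hopt : IsOptimal M l x α) {t : ℝ} (ht : 0 < t)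
    (hlt : ENNReal.ofReal t < hitTime M x α) :
    HasDerivAt (fun s => val M l (traj x α s)) (-(l (traj x α t))) t := by
  obtain ⟨b, htb, hble⟩ : ∃ b, t < b ∧ ENNReal.ofReal b ≤ hitTime M x α := by
    rcases eq_or_ne (hitTime M x α) ⊤ with htop | hne
    · exact ⟨t + 1, by linarith, htop ▸ le_top⟩
    · set T := (hitTime M x α).toReal
      have hofT : ENNReal.ofReal T = hitTime M x α := ENNReal.ofReal_toReal hne
      have htT : t < T := by
        rw [← hofT] at hlt
        exact (ENNReal.ofReal_lt_ofReal_iff_of_nonneg ht.le).1 hlt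
      refine ⟨(t + T)/2, by linarith, ?_⟩
      rw [← hofT]
      exact ENNReal.ofReal_le_ofReal (by linarith)
  have hycont : Continuous (traj x α) := traj_continuous hopt.1 x
  have hFd : HasDerivAt (fun s => (∫ r in s..b, l (traj x α r)) + val M l (traj x α b))
      (-(l (traj x α t))) t := by
    have h := intervalIntegral.integral_hasDerivAt_left
      ((hlc.comp hycont).intervalIntegrable t b)
      ((hlc.comp hycont).stronglyMeasurableAtFilter volume (𝓝 t))
      (hlc.comp hycont).continuousAt
    exact h.add_const _
  refine hFd.congr_of_eventuallyEq ?_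
  filter_upwards [isOpen_Ioo.mem_nhds (⟨ht, htb⟩ : t ∈ Set.Ioo 0 b)] with s hs
  rw [val_dpp hM hMne hlc hl0 hC hC0 hopt hs.1.le hs.2.le hble,
    intervalIntegral.integral_of_le hs.2.le]

/-- pointwise version of part (i) -/
lemma main_i {v : Euc n → ℝ} {y : ℝ → Euc n} {t : ℝ} {a p : Euc n} {lz : ℝ}
    (hyd : HasDerivAt y a t) (ha : ‖a‖ ≤ 1)
    (hψ : HasDerivAt (fun s => v (y s)) (-lz) t)
    (hycont : Continuous y)
    (hp : p ∈ superDiff v (y t)) (hp0 : p ≠ 0) (hnp : ‖p‖ = lz) :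
    a = -(‖p‖⁻¹ • p) := by
  set σ : ℝ → Euc n := fun s => (s - t)⁻¹ • (y s - y t) with hσ
  set ρ : ℝ → ℝ := fun s => (s - t)⁻¹ * (v (y s) - v (y t)) with hρ
  have hys : Tendsto σ (𝓝[≠] t) (𝓝 a) := by
    have := hasDerivAt_iff_tendsto_slope.1 hyd
    refine this.congr fun s => ?_
    simp [slope, hσ, vsub_eq_sub]
  have hψs : Tendsto ρ (𝓝[≠] t) (𝓝 (-lz)) := by
    have := hasDerivAt_iff_tendsto_slope.1 hψ
    refine this.congr fun s => ?_
    rw [slope_def_field, hρ, div_eq_inv_mul]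
  have hmonoR : 𝓝[>] t ≤ 𝓝[≠] t :=
    nhdsWithin_mono t fun s hs => Set.mem_compl_singleton_iff.2 (ne_of_gt hs)
  have hmonoL : 𝓝[<] t ≤ 𝓝[≠] t :=
    nhdsWithin_mono t fun s hs => Set.mem_compl_singleton_iff.2 (ne_of_lt hs)
  -- right limit : -lz ≤ ⟪p, a⟫ + ε ‖a‖
  have claim1 : ∀ ε : ℝ, 0 < ε → -lz ≤ (inner ℝ p a : ℝ) + ε * ‖a‖ := by
    intro ε hε
    have h1 : ∀ᶠ s in 𝓝 t,
        v (y s) ≤ v (y t) + (inner ℝ p (y s - y t) : ℝ) + ε * ‖y s - y t‖ :=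
      hycont.continuousAt.eventually (hp ε hε)
    have hev : ∀ᶠ s in 𝓝[>] t, ρ s ≤ (inner ℝ p (σ s) : ℝ) + ε * ‖σ s‖ := by
      filter_upwards [h1.filter_mono nhdsWithin_le_nhds, self_mem_nhdsWithin] with s hs hst
      have hd : (0:ℝ) < s - t := sub_pos.2 hst
      have key : v (y s) - v (y t) ≤ (inner ℝ p (y s - y t) : ℝ) + ε * ‖y s - y t‖ := by
        linarith [hs]
      have h2 := mul_le_mul_of_nonneg_left key (inv_nonneg.2 hd.le)
      have e2 : (inner ℝ p (σ s) : ℝ) = (s - t)⁻¹ * (inner ℝ p (y s - y t) : ℝ) := by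
        rw [hσ]; exact real_inner_smul_right _ _ _
      have e3 : ‖σ s‖ = (s - t)⁻¹ * ‖y s - y t‖ := by
        rw [hσ]
        simp only [norm_smul, Real.norm_eq_abs, abs_of_pos (inv_pos.2 hd)]
      have e4 : (s - t)⁻¹ * ((inner ℝ p (y s - y t) : ℝ) + ε * ‖y s - y t‖)
          = (s - t)⁻¹ * (inner ℝ p (y s - y t) : ℝ)
            + ε * ((s - t)⁻¹ * ‖y s - y t‖) := by ring
      rw [hρ]
      rw [e2, e3]
      linarith [h2, e4.le, e4.ge]
    have hlim : Tendsto (fun s => (inner ℝ p (σ s) : ℝ) + ε * ‖σ s‖) (𝓝[>] t)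
        (𝓝 ((inner ℝ p a : ℝ) + ε * ‖a‖)) :=
      (tendsto_const_nhds.inner (hys.mono_left hmonoR)).add
        (((hys.mono_left hmonoR).norm).const_mul ε)
    exact le_of_tendsto_of_tendsto (hψs.mono_left hmonoR) hlim hev
  -- left limit : ⟪p, a⟫ - ε ‖a‖ ≤ -lz
  have claim2 : ∀ ε : ℝ, 0 < ε → (inner ℝ p a : ℝ) - ε * ‖a‖ ≤ -lz := by
    intro ε hε
    have h1 : ∀ᶠ s in 𝓝 t,
        v (y s) ≤ v (y t) + (inner ℝ p (y s - y t) : ℝ) + ε * ‖y s - y t‖ :=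
      hycont.continuousAt.eventually (hp ε hε)
    have hev : ∀ᶠ s in 𝓝[<] t, (inner ℝ p (σ s) : ℝ) - ε * ‖σ s‖ ≤ ρ s := by
      filter_upwards [h1.filter_mono nhdsWithin_le_nhds, self_mem_nhdsWithin] with s hs hst
      have hd : s - t < 0 := sub_neg.2 hst
      have key : v (y s) - v (y t) ≤ (inner ℝ p (y s - y t) : ℝ) + ε * ‖y s - y t‖ := by
        linarith [hs]
      have hi : (s - t)⁻¹ ≤ 0 := inv_nonpos.2 hd.le
      have h2 := mul_le_mul_of_nonpos_left key hi
      have e2 : (inner ℝ p (σ s) : ℝ) = (s - t)⁻¹ * (inner ℝ p (y s - y t) : ℝ) := by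
        rw [hσ]; exact real_inner_smul_right _ _ _
      have e3 : ‖σ s‖ = -((s - t)⁻¹) * ‖y s - y t‖ := by
        rw [hσ]
        simp only [norm_smul, Real.norm_eq_abs, abs_of_neg (inv_neg''.2 hd)]
      have e4 : (s - t)⁻¹ * ((inner ℝ p (y s - y t) : ℝ) + ε * ‖y s - y t‖)
          = (s - t)⁻¹ * (inner ℝ p (y s - y t) : ℝ)
            - ε * (-((s - t)⁻¹) * ‖y s - y t‖) := by ring
      rw [hρ]
      rw [e2, e3]
      linarith [h2, e4.le, e4.ge]
    have hlim : Tendsto (fun s => (inner ℝ p (σ s) : ℝ) - ε * ‖σ s‖) (𝓝[<] t)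
        (𝓝 ((inner ℝ p a : ℝ) - ε * ‖a‖)) :=
      (tendsto_const_nhds.inner (hys.mono_left hmonoL)).sub
        (((hys.mono_left hmonoL).norm).const_mul ε)
    exact le_of_tendsto_of_tendsto hlim (hψs.mono_left hmonoL) hev
  have hR : -lz ≤ (inner ℝ p a : ℝ) := by
    by_contra hcon
    push_neg at hcon
    have hεpos : 0 < (-lz - (inner ℝ p a : ℝ)) / 2 := by linarith
    have h := claim1 _ hεpos
    have h2 : ((-lz - (inner ℝ p a : ℝ)) / 2) * ‖a‖ ≤ (-lz - (inner ℝ p a : ℝ)) / 2 := by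
      nlinarith [norm_nonneg a]
    linarith
  have hL : (inner ℝ p a : ℝ) ≤ -lz := by
    by_contra hcon
    push_neg at hcon
    have hεpos : 0 < ((inner ℝ p a : ℝ) + lz) / 2 := by linarith
    have h := claim2 _ hεpos
    have h2 : (((inner ℝ p a : ℝ) + lz) / 2) * ‖a‖ ≤ ((inner ℝ p a : ℝ) + lz) / 2 := by
      nlinarith [norm_nonneg a]
    linarith
  have hip : (inner ℝ p a : ℝ) = -‖p‖ := by
    rw [hnp]; exact le_antisymm hL hR
  have hnp0 : 0 < ‖p‖ := norm_pos_iff.2 hp0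
  have h1 : (inner ℝ p (-a) : ℝ) = ‖p‖ := by rw [inner_neg_right, hip, neg_neg]
  have hCS : (inner ℝ p (-a) : ℝ) ≤ ‖p‖ * ‖-a‖ := real_inner_le_norm _ _
  have hna : ‖-a‖ ≤ 1 := by rwa [norm_neg]
  have h2 : ‖p‖ * ‖-a‖ ≤ ‖p‖ * 1 := mul_le_mul_of_nonneg_left hna hnp0.le
  have h3 : ‖p‖ * ‖-a‖ = ‖p‖ := le_antisymm (by linarith) ((le_of_eq h1.symm).trans hCS)
  have hna1 : ‖-a‖ = 1 := by
    have := mul_left_cancel₀ hnp0.ne' (h3.trans (mul_one ‖p‖).symm)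
    exact this
  have heq : ‖-a‖ • p = ‖p‖ • (-a) := inner_eq_norm_mul_iff_real.1 (by rw [h1, h3])
  rw [hna1, one_smul] at heq
  have h5 : ‖p‖⁻¹ • p = ‖p‖⁻¹ • (‖p‖ • -a) := congrArg (fun q => ‖p‖⁻¹ • q) heq
  rw [smul_smul, inv_mul_cancel₀ hnp0.ne', one_smul] at h5
  rw [h5, neg_neg]

-- chunk 7
lemma ae_deriv {α : ℝ → Euc n} (hα : Admissible α) (x : Euc n) :
    ∀ᵐ t ∂(volume : Measure ℝ), 0 < t → HasDerivAt (traj x α) (α t) t := by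
  set f : ℝ → Euc n := tr α with hf
  have hmeas : Measurable f := tr_meas hα.1
  have hbd := tr_bound hα
  have hloc : LocallyIntegrable f volume := by
    intro t
    refine ⟨Set.Ioo (t-1) (t+1), isOpen_Ioo.mem_nhds (by constructor <;> linarith), ?_⟩
    exact Measure.integrableOn_of_bounded (M := 1) measure_Ioo_lt_top.ne
      hmeas.aestronglyMeasurable (ae_restrict_of_ae hbd)
  have hLeb := VitaliFamily.ae_tendsto_average_norm_sub
    (Besicovitch.vitaliFamily (volume : Measure ℝ)) hloc
  filter_upwards [hLeb, hbd] with t ht hbt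
  intro htpos
  have hA : Tendsto (fun r => ⨍ y in Metric.closedBall t r, ‖f y - f t‖) (𝓝[>] 0) (𝓝 0) :=
    ht.comp (Besicovitch.tendsto_filterAt volume t)
  have hdist : Tendsto (fun s : ℝ => |s - t|) (𝓝[≠] t) (𝓝[>] 0) := by
    apply tendsto_nhdsWithin_of_tendsto_nhds_of_eventually_within
    · have h1 : Tendsto (fun s : ℝ => |s - t|) (𝓝 t) (𝓝 |t - t|) :=
        ((continuous_id.sub continuous_const).abs).tendsto t
      simpa using h1.mono_left nhdsWithin_le_nhds
    · filter_upwards [self_mem_nhdsWithin] with s hs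
      exact abs_pos.2 (sub_ne_zero.2 hs)
  have hB : Tendsto (fun s => ⨍ y in Metric.closedBall t (|s - t|), ‖f y - f t‖)
      (𝓝[≠] t) (𝓝 0) := hA.comp hdist
  set G : ℝ → Euc n := fun u => ∫ r in (0:ℝ)..u, f r with hG
  have hGd : HasDerivAt G (f t) t := by
    rw [hasDerivAt_iff_tendsto]
    have hbound : ∀ s : ℝ, s ≠ t → ‖s - t‖⁻¹ * ‖G s - G t - (s - t) • f t‖
        ≤ 2 * ⨍ y in Metric.closedBall t (|s - t|), ‖f y - f t‖ := by
      intro s hst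
      have hd0 : 0 < |s - t| := abs_pos.2 (sub_ne_zero.2 hst)
      set A := ⨍ y in Metric.closedBall t (|s - t|), ‖f y - f t‖ with hA_def
      have hI : IntegrableOn (fun y => ‖f y - f t‖) (Metric.closedBall t (|s - t|)) := by
        refine Measure.integrableOn_of_bounded (M := 1 + ‖f t‖)
          measure_closedBall_lt_top.ne
          ((hmeas.sub measurable_const).norm).aestronglyMeasurable ?_
        refine ae_restrict_of_ae ?_
        filter_upwards [hbd] with r hr
        calc ‖‖f r - f t‖‖ = ‖f r - f t‖ := norm_norm _
          _ ≤ ‖f r‖ + ‖f t‖ := norm_sub_le _ _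
          _ ≤ 1 + ‖f t‖ := by linarith
      have heq1 : G s - G t = ∫ r in t..s, f r :=
        intervalIntegral.integral_interval_sub_left (tr_intervalIntegrable hα 0 s)
          (tr_intervalIntegrable hα 0 t)
      have heq2 : (s - t) • f t = ∫ _ in t..s, f t := (intervalIntegral.integral_const _).symm
      have heq3 : G s - G t - (s - t) • f t = ∫ r in t..s, (f r - f t) := by
        rw [heq1, heq2, ← intervalIntegral.integral_sub (tr_intervalIntegrable hα t s)
          intervalIntegrable_const]
      have hsub : Set.uIoc t s ⊆ Metric.closedBall t (|s - t|) := by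
        intro r hr
        rw [Metric.mem_closedBall, Real.dist_eq]
        rcases le_total t s with h | h
        · rw [Set.uIoc_of_le h] at hr
          rw [abs_of_nonneg (by linarith [hr.1] : (0:ℝ) ≤ r - t),
            abs_of_nonneg (by linarith : (0:ℝ) ≤ s - t)]
          linarith [hr.2]
        · rw [Set.uIoc_of_ge h] at hr
          rw [abs_of_nonpos (by linarith [hr.2] : r - t ≤ 0),
            abs_of_nonpos (by linarith : s - t ≤ 0)]
          linarith [hr.1]
      have hnorm_le : ‖∫ r in t..s, (f r - f t)‖
          ≤ ∫ y in Metric.closedBall t (|s - t|), ‖f y - f t‖ := by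
        refine (intervalIntegral.norm_integral_le_integral_norm_uIoc).trans ?_
        refine setIntegral_mono_set hI ?_ (HasSubset.Subset.eventuallyLE hsub)
        exact Filter.Eventually.of_forall fun y => norm_nonneg _
      have hvol : (volume (Metric.closedBall t (|s - t|))).toReal = 2 * |s - t| := by
        rw [Real.volume_closedBall, ENNReal.toReal_ofReal (by positivity)]
      have havg : ∫ y in Metric.closedBall t (|s - t|), ‖f y - f t‖ = (2 * |s - t|) * A := by
        rw [hA_def, setAverage_eq, measureReal_def, hvol, smul_eq_mul, ← mul_assoc,
          mul_inv_cancel₀ (by positivity), one_mul]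
      calc ‖s - t‖⁻¹ * ‖G s - G t - (s - t) • f t‖
          ≤ ‖s - t‖⁻¹ * ((2 * |s - t|) * A) := by
            refine mul_le_mul_of_nonneg_left ?_ (inv_nonneg.2 (norm_nonneg _))
            rw [heq3]
            exact hnorm_le.trans havg.le
        _ = 2 * A := by
            rw [Real.norm_eq_abs]
            field_simp
    have hsq : Tendsto (fun s => ‖s - t‖⁻¹ * ‖G s - G t - (s - t) • f t‖) (𝓝[≠] t) (𝓝 0) := by
      refine squeeze_zero' ?_ ?_ (by simpa using hB.const_mul 2)
      · exact Filter.Eventually.of_forall fun s => by positivity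
      · filter_upwards [self_mem_nhdsWithin] with s hs
        exact hbound s hs
    rw [← nhdsNE_sup_pure t]
    refine Tendsto.sup hsq ?_
    have hval0 : ‖t - t‖⁻¹ * ‖G t - G t - (t - t) • f t‖ = 0 := by simp
    have h := tendsto_pure_nhds (fun s => ‖s - t‖⁻¹ * ‖G s - G t - (s - t) • f t‖) t
    rwa [hval0] at h
  have hxGd : HasDerivAt (fun u => x + G u) (f t) t := hGd.const_add x
  have hft : f t = α t := by rw [hf]; simp [tr, htpos.le]
  rw [← hft]
  refine hxGd.congr_of_eventuallyEq ?_
  filter_upwards [Ioi_mem_nhds htpos] with u hu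
  rw [traj_eq x α u, max_eq_left (le_of_lt hu)]

end SOpt
end

/-- under assumption (F), along an optimal trajectory:
(i) a.e. on `(0,t_x(α))`, `ẏ(t) (= α(t)) = -p/|p|` for every nonzero `p ∈ D⁺v(y(t))`;
(ii) `|p| = ℓ(y(t))` for every `p ∈ D⁺v(y(t))` and `t ∈ (0,t_x(α))`;
(iii) `D⁺v(y(t))` has at most one element for every `t ∈ (0,t_x(α))`. -/
theorem stmt13 {n : ℕ} (M : Set (Euc n)) (l : Euc n → ℝ)
    (hMne : M.Nonempty) (hMcl : IsClosed M)
    (hlc : Continuous l) (hlbd : BddAbove (Set.range l))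
    (hlpos : ∀ z ∉ M, 0 < l z) (hlzero : ∀ z ∈ M, l z = 0)
    (x : Euc n) (α : ℝ → Euc n) (hopt : IsOptimal M l x α) :
    (∀ᵐ t ∂(volume : Measure ℝ), 0 < t → ENNReal.ofReal t < hitTime M x α →
      ∀ p ∈ superDiff (val M l) (traj x α t), p ≠ 0 → α t = -(‖p‖⁻¹ • p)) ∧
    (∀ t : ℝ, 0 < t → ENNReal.ofReal t < hitTime M x α →
      ∀ p ∈ superDiff (val M l) (traj x α t), ‖p‖ = l (traj x α t)) ∧
    (∀ t : ℝ, 0 < t → ENNReal.ofReal t < hitTime M x α →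
      (superDiff (val M l) (traj x α t)).Subsingleton) := by
  obtain ⟨C, hCub⟩ := hlbd
  have hC : ∀ z, l z ≤ C := fun z => hCub (Set.mem_range_self z)
  have hl0 : ∀ z, 0 ≤ l z := fun z => by
    by_cases h : z ∈ M
    · exact (hlzero z h).ge
    · exact (hlpos z h).le
  have hC0 : (0:ℝ) ≤ C := (hl0 0).trans (hC 0)
  have hα := hopt.1
  have part2 : ∀ t : ℝ, 0 < t → ENNReal.ofReal t < hitTime M x α →
      ∀ p ∈ superDiff (val M l) (traj x α t), ‖p‖ = l (traj x α t) := by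
    intro t ht hlt p hp
    exact le_antisymm (SOpt.superdiff_norm_le hMcl hMne hlc hl0 hC hC0 hp)
      (SOpt.le_superdiff_norm hMcl hMne hlc hl0 hC hC0 hopt ht hlt.le hp)
  refine ⟨?_, part2, fun t ht hlt => SOpt.superdiff_subsingleton _ _ _ (part2 t ht hlt)⟩
  filter_upwards [SOpt.ae_deriv hα x, hα.2] with t hderiv hbd ht hlt p hp hp0
  have hψ := SOpt.psi_hasDerivAt hMcl hMne hlc hl0 hC hC0 hopt ht hlt
  exact SOpt.main_i (hderiv ht) (hbd ht.le) hψ (SOpt.traj_continuous hα x) hp hp0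
    (part2 t ht hlt p hp)
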